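/- arXiv:1312.1955 — 5 statements merged into one kernel-verified Lean document; each statement's English description precedes it below -/
import Mathlib

section
/- Given an equilibrium assignment (w, h, λ), let i* be a hospital of minimum cost among hospitals with h⁻¹(i) ≠ ∅, and define h' by h'(j) = i* for all j (with corresponding quota vector λ'). If all patients have identical valuations, then (w, h', λ') is also an equilibrium assignment with the same social welfare and total cost at most that of (w, h, λ). -/
/-- With identical valuations, reassigning all patients to a cheapest used
hospital `istar` yields another equilibrium assignment with the same social welfare and
total cost at most that of the original assignment. -/
theorem cheapest_hospital_reassignment
    {k m : ℕ} (v : Fin k → Fin m → ℝ) (w : Fin k → ℝ) (h : Fin m → Fin k)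
    (c : Fin k → ℝ) (B : ℝ) (istar : Fin k)
    (hident : ∀ (i : Fin k) (j j' : Fin m), v i j = v i j')
    (hfeas : ∑ j : Fin m, c (h j) ≤ B)
    (hIR : ∀ j : Fin m, 0 ≤ v (h j) j - w (h j))
    (hstable : ∀ (j : Fin m) (i : Fin k), v i j - w i ≤ v (h j) j - w (h j))
    (hused : ∃ j : Fin m, h j = istar)
    (hmin : ∀ i : Fin k, (∃ j : Fin m, h j = i) → c istar ≤ c i) :
    -- (w, h', λ') with h' constant equal to istar is an equilibrium assignment:
    (∀ j : Fin m, 0 ≤ v istar j - w istar) ∧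
    (∀ (j : Fin m) (i : Fin k), v i j - w i ≤ v istar j - w istar) ∧
    (∑ j : Fin m, c istar ≤ B) ∧
    -- same social welfare:
    (∑ j : Fin m, (v istar j - w istar) = ∑ j : Fin m, (v (h j) j - w (h j))) ∧
    -- total cost at most that of (w, h, λ):
    (∑ j : Fin m, c istar ≤ ∑ j : Fin m, c (h j)) := by
  obtain ⟨j0, hj0⟩ := hused
  have key : ∀ j : Fin m, v istar j - w istar = v (h j) j - w (h j) := by
    intro j
    have h1 : v istar j - w istar ≤ v (h j) j - w (h j) := hstable j istar
    have h2 : v (h j) j0 - w (h j) ≤ v istar j0 - w istar := by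
      have := hstable j0 (h j); rwa [hj0] at this
    have h3 : v (h j) j - w (h j) ≤ v istar j - w istar := by
      rwa [hident (h j) j0 j, hident istar j0 j] at h2
    linarith
  refine ⟨fun j => (key j) ▸ hIR j, fun j i => (key j) ▸ hstable j i, ?_, ?_, ?_⟩
  · calc ∑ j : Fin m, c istar ≤ ∑ j : Fin m, c (h j) :=
        Finset.sum_le_sum fun j _ => hmin (h j) ⟨j, rfl⟩
      _ ≤ B := hfeas
  · exact Finset.sum_congr rfl fun j _ => key j
  · exact Finset.sum_le_sum fun j _ => hmin (h j) ⟨j, rfl⟩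
end

section
/- In any stable and feasible matching of a unit-demand auction, identical goods have equal prices: if goods i and i' satisfy v_{ij} = v_{i'j} for every bidder j, then p_i = p_{i'}. -/
/-- in any stable and feasible matching of a unit-demand auction,
identical goods have equal prices. -/
theorem identical_goods_equal_prices {g m : ℕ} (v : Fin g → Fin m → ℤ)
    (u : Fin m → ℤ) (p : Fin g → ℤ) (μ : Finset (Fin g × Fin m))
    (hv : ∀ i j, 0 ≤ v i j) (hu : ∀ j, 0 ≤ u j) (hp : ∀ i', 0 ≤ p i')
    (hμ : ∀ e ∈ μ, ∀ e' ∈ μ, (e.1 = e'.1 → e = e') ∧ (e.2 = e'.2 → e = e'))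
    -- feasibility:
    (hmatched : ∀ e ∈ μ, u e.2 = v e.1 e.2 - p e.1)
    (hunmatchedBidder : ∀ j : Fin m, (∀ e ∈ μ, e.2 ≠ j) → u j = 0)
    (hunmatchedGood : ∀ i' : Fin g, (∀ e ∈ μ, e.1 ≠ i') → p i' = 0)
    -- stability:
    (hstable : ∀ (i' : Fin g) (j : Fin m), v i' j - p i' ≤ u j)
    -- identical goods:
    (i i' : Fin g) (hident : ∀ j : Fin m, v i j = v i' j) :
    p i = p i' := by
  have key : ∀ a b : Fin g, (∀ j, v a j = v b j) → p a ≤ p b := by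
    intro a b hab
    by_cases h : ∃ e ∈ μ, e.1 = a
    · obtain ⟨e, he, hea⟩ := h
      have h1 := hmatched e he
      have h2 := hstable b e.2
      rw [hea] at h1
      rw [h1, hab e.2] at h2
      linarith
    · push_neg at h
      have := hunmatchedGood a h
      rw [this]; exact hp b
  exact le_antisymm (key i i' hident) (key i' i fun j => (hident j).symm)
end

section
/- Let (w, h, λ) be an equilibrium assignment of a Provision-after-Wait instance and let (g, m, v̂) be the unit-demand auction built from any quota vector λ̂ with λ̂_i ≥ λ_i for all i (hospital i gives λ̂_i identical goods). Define the matching (u, p, μ) by u_j = v_{h(j)j} − w_{h(j)}, p_{(i,r)} = w_i for all copies r, and μ matching the patients assigned to hospital i with distinct copies of hospital i. Then (u, p, μ) is stable and weakly feasible. -/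
/-- an equilibrium assignment `(w, h, λ)` of a Provision-after-Wait
instance induces a stable, weakly feasible matching of the unit-demand auction built
from any quota vector `λ̂ ≥ λ` (hospital `i` gives `λ̂ i` identical goods with prices
`w i`, bidders' utilities `u j = v (h j) j − w (h j)`). -/
theorem equilibrium_induces_stable_matching {k m : ℕ}
    (v : Fin k → Fin m → ℝ) (w : Fin k → ℝ) (h : Fin m → Fin k)
    (lamhat : Fin k → ℕ)
    (hquota : ∀ i : Fin k,
      (Finset.univ.filter (fun j => h j = i)).card ≤ lamhat i)
    (hIR : ∀ j : Fin m, 0 ≤ v (h j) j - w (h j))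
    (hstable : ∀ (j : Fin m) (i : Fin k), v i j - w i ≤ v (h j) j - w (h j)) :
    ∃ μ : Finset (((i : Fin k) × Fin (lamhat i)) × Fin m),
      -- μ is a partial matching
      (∀ e ∈ μ, ∀ e' ∈ μ, (e.1 = e'.1 → e = e') ∧ (e.2 = e'.2 → e = e')) ∧
      -- it matches each patient with a copy of his assigned hospital
      (∀ e ∈ μ, e.1.1 = h e.2) ∧
      (∀ j : Fin m, ∃ e ∈ μ, e.2 = j) ∧
      -- weak feasibility of (u, p, μ) with u j = v (h j) j - w (h j), p (i,r) = w i
      (∀ e ∈ μ, v (h e.2) e.2 - w (h e.2) = v e.1.1 e.2 - w e.1.1) ∧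
      -- stability
      (∀ (g : (i : Fin k) × Fin (lamhat i)) (j : Fin m),
        v g.1 j - w g.1 ≤ v (h j) j - w (h j)) := by
  set r : Fin m → ℕ :=
    fun j => (Finset.univ.filter (fun j' => h j' = h j ∧ j' < j)).card with hr
  have hrlt : ∀ j : Fin m, r j < lamhat (h j) := by
    intro j
    refine lt_of_lt_of_le ?_ (hquota (h j))
    apply Finset.card_lt_card
    refine ⟨fun x hx => ?_, ?_⟩
    · simp only [Finset.mem_filter] at hx ⊢
      exact ⟨hx.1, hx.2.1⟩
    · intro hsub
      have := hsub (Finset.mem_filter.mpr ⟨Finset.mem_univ j, rfl⟩)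
      simp only [Finset.mem_filter] at this
      exact lt_irrefl j this.2.2
  have hrinj : ∀ a b : Fin m, h a = h b → r a = r b → a = b := by
    intro a b hab hrab
    by_contra hne
    wlog hlt : a < b generalizing a b
    · exact this b a hab.symm hrab.symm (Ne.symm hne)
        (lt_of_le_of_ne (not_lt.mp hlt) (Ne.symm hne))
    have hss : (Finset.univ.filter (fun j' => h j' = h a ∧ j' < a)) ⊂
        (Finset.univ.filter (fun j' => h j' = h b ∧ j' < b)) := by
      refine ⟨fun x hx => ?_, ?_⟩
      · simp only [Finset.mem_filter] at hx ⊢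
        exact ⟨hx.1, hx.2.1.trans hab, hx.2.2.trans hlt⟩
      · intro hsub
        have := hsub (Finset.mem_filter.mpr ⟨Finset.mem_univ a, hab, hlt⟩)
        simp only [Finset.mem_filter] at this
        exact lt_irrefl a this.2.2
    exact absurd hrab (Nat.ne_of_lt (Finset.card_lt_card hss))
  set f : Fin m → ((i : Fin k) × Fin (lamhat i)) × Fin m :=
    fun j => (⟨h j, ⟨r j, hrlt j⟩⟩, j) with hf
  refine ⟨Finset.univ.image f, ?_, ?_, ?_, ?_, fun g j => hstable j g.1⟩
  · intro e he e' he'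
    simp only [Finset.mem_image, Finset.mem_univ, true_and] at he he'
    obtain ⟨a, rfl⟩ := he
    obtain ⟨b, rfl⟩ := he'
    constructor
    · intro h1
      have h2 : h a = h b := congrArg Sigma.fst h1
      have h3 : r a = r b :=
        congrArg (fun s : (i : Fin k) × Fin (lamhat i) => (s.2 : ℕ)) h1
      rw [hrinj a b h2 h3]
    · intro h1
      simp only [hf] at h1
      rw [h1]
  · intro e he
    simp only [Finset.mem_image, Finset.mem_univ, true_and] at he
    obtain ⟨a, rfl⟩ := he
    rfl
  · intro j
    exact ⟨f j, Finset.mem_image_of_mem f (Finset.mem_univ j), rfl⟩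
  · intro e he
    simp only [Finset.mem_image, Finset.mem_univ, true_and] at he
    obtain ⟨a, rfl⟩ := he
    rfl
end

section
/- Under the dynamics with independent patient population, the waiting-time vector never exceeds the minimum equilibrium waiting-time vector: if w(t) ≤ w̄ componentwise and w_i(t) = w̄_i for some hospital i, then the demand rate satisfies d_i(t) ≤ λ_i, hence the right derivative of w_i at t is nonpositive. -/
/-- under the dynamics, if `w(t) ≤ w̄` componentwise and `w_i(t) = w̄_i`
for some hospital `i`, then every type `j` with `h̄(j) ≠ i` has zero demand for `i`,
hence the demand rate satisfies `d_i(t) ≤ λ_i` (so the right derivative of `w_i` at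
`t` is nonpositive). -/
theorem demand_rate_bounded {k m : ℕ}
    (v : Fin k → Fin m → ℝ) (lam : Fin k → ℕ)
    (w wbar : Fin k → ℝ) (hbar : Fin m → Fin k)
    (d : Fin k → Fin m → ℝ) (i : Fin k)
    -- w(t) ≤ w̄ componentwise, and w_i(t) = w̄_i:
    (hle : ∀ i', w i' ≤ wbar i') (heq : w i = wbar i)
    -- (w̄, h̄, λ) is an equilibrium assignment:
    (hquota : ∀ i' : Fin k,
      (Finset.univ.filter (fun j => hbar j = i')).card ≤ lam i')
    (hstablebar : ∀ (j : Fin m) (i' : Fin k),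
      v i' j - wbar i' ≤ v (hbar j) j - wbar (hbar j))
    -- demand rates at time t:
    (hd0 : ∀ i' j, 0 ≤ d i' j) (hd1 : ∀ i' j, d i' j ≤ 1)
    (hdsum : ∀ j, ∑ i' : Fin k, d i' j = 1)
    (hdmax : ∀ (i' : Fin k) (j : Fin m), 0 < d i' j →
      ∀ i'' : Fin k, v i'' j - w i'' ≤ v i' j - w i')
    -- tie-breaking: if h̄(j) ≠ i and h̄(j) also maximizes j's utility at time t,
    -- then j does not choose i:
    (htie : ∀ j : Fin m, hbar j ≠ i →
      (∀ i' : Fin k, v i' j - w i' ≤ v (hbar j) j - w (hbar j)) → d i j = 0) :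
    (∀ j : Fin m, hbar j ≠ i → d i j = 0) ∧
    ∑ j : Fin m, d i j ≤ lam i := by
  have hzero : ∀ j : Fin m, hbar j ≠ i → d i j = 0 := by
    intro j hne
    rcases eq_or_lt_of_le (hd0 i j) with h0 | hpos
    · exact h0.symm
    · -- i maximizes j's utility at time t
      have hmax := hdmax i j hpos
      -- then hbar j also maximizes
      apply htie j hne
      intro i'
      calc v i' j - w i' ≤ v i j - w i := hmax i'
        _ = v i j - wbar i := by rw [heq]
        _ ≤ v (hbar j) j - wbar (hbar j) := hstablebar j i
        _ ≤ v (hbar j) j - w (hbar j) := by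
            have := hle (hbar j); linarith
  refine ⟨hzero, ?_⟩
  have : ∑ j : Fin m, d i j
      = ∑ j ∈ Finset.univ.filter (fun j => hbar j = i), d i j := by
    rw [Finset.sum_filter]
    apply Finset.sum_congr rfl
    intro j _
    by_cases h : hbar j = i
    · simp [h]
    · simp [h, hzero j h]
  rw [this]
  calc ∑ j ∈ Finset.univ.filter (fun j => hbar j = i), d i j
      ≤ ∑ j ∈ Finset.univ.filter (fun j => hbar j = i), 1 := by
        exact Finset.sum_le_sum fun j _ => hd1 i j
    _ = (Finset.univ.filter (fun j => hbar j = i)).card := by simp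
    _ ≤ lam i := by exact_mod_cast hquota i
end

section
/- Let v : [0,1] → ℝ be nondecreasing, concave, differentiable with v(0) = 0, and let p : [0,1] → [0,1] be nondecreasing with ∫₀¹ p(x) dx = B and p constant on [x₀, 1] where v is constant on [x₀, 1] and strictly increasing on [0, x₀]. Then ∫₀^{x₀} (B − p(x))(1 − x) v'(x) dx ≥ 0. -/
open intervalIntegral

/-- the core inequality `∫₀^{x₀} (B − p(x))(1 − x) v'(x) dx ≥ 0` in the
two-hospital lottery comparison. -/
theorem core_lottery_inequality
    (v p : ℝ → ℝ) (B x₀ : ℝ)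
    (hx₀ : x₀ ∈ Set.Icc (0 : ℝ) 1)
    -- v : [0,1] → ℝ nondecreasing, concave, differentiable, v 0 = 0
    (hvmono : MonotoneOn v (Set.Icc 0 1))
    (hvconc : ConcaveOn ℝ (Set.Icc 0 1) v)
    (hvdiff : ∀ x ∈ Set.Icc (0 : ℝ) 1, DifferentiableAt ℝ v x)
    (hv0 : v 0 = 0)
    -- v strictly increasing on [0, x₀] and constant on [x₀, 1]
    (hvstrict : StrictMonoOn v (Set.Icc 0 x₀))
    (hvconst : ∀ x ∈ Set.Icc x₀ 1, v x = v x₀)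
    -- p : [0,1] → [0,1] nondecreasing with ∫₀¹ p = B, constant on [x₀, 1]
    (hpmono : MonotoneOn p (Set.Icc 0 1))
    (hprange : ∀ x ∈ Set.Icc (0 : ℝ) 1, p x ∈ Set.Icc (0 : ℝ) 1)
    (hpconst : ∀ x ∈ Set.Icc x₀ 1, p x = p x₀)
    (hpint : IntervalIntegrable p MeasureTheory.volume 0 1)
    (hpB : ∫ x in (0 : ℝ)..1, p x = B)
    -- integrability of the integrand
    (hint : IntervalIntegrable (fun x => (B - p x) * ((1 - x) * deriv v x))
      MeasureTheory.volume 0 x₀) :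
    0 ≤ ∫ x in (0 : ℝ)..x₀, (B - p x) * ((1 - x) * deriv v x) := by
  obtain ⟨hx0, hx1⟩ := hx₀
  rcases eq_or_lt_of_le hx0 with rfl | hx0pos
  · simp
  set g : ℝ → ℝ := fun x => (1 - x) * deriv v x with hg
  -- derivative of v is nonnegative on [0, 1)
  have hd0 : ∀ x ∈ Set.Ico (0 : ℝ) 1, 0 ≤ deriv v x := by
    intro x hx
    have hxI : x ∈ Set.Icc (0 : ℝ) 1 := ⟨hx.1, hx.2.le⟩
    have h1I : (1 : ℝ) ∈ Set.Icc (0 : ℝ) 1 := ⟨zero_le_one, le_refl _⟩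
    have hs : slope v x 1 ≤ deriv v x :=
      hvconc.slope_le_deriv hxI h1I hx.2 (hvdiff x hxI)
    refine le_trans ?_ hs
    rw [slope_def_field]
    exact div_nonneg (sub_nonneg.2 (hvmono hxI h1I hx.2.le)) (by linarith [hx.2])
  -- antitone of deriv v
  have hdant : AntitoneOn (deriv v) (Set.Icc 0 1) := hvconc.antitoneOn_deriv hvdiff
  -- g is antitone on [0,1]
  have hgant : AntitoneOn g (Set.Icc 0 1) := by
    intro x hx y hy hxy
    rcases eq_or_lt_of_le hy.2 with rfl | hy1
    · simp only [hg]
      rcases eq_or_lt_of_le hx.2 with rfl | hx1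
      · simp
      · simp only [sub_self, zero_mul]
        exact mul_nonneg (by linarith) (hd0 x ⟨hx.1, hx1⟩)
    · have h1 : 0 ≤ deriv v y := hd0 y ⟨hy.1, hy1⟩
      have h2 : deriv v y ≤ deriv v x := hdant hx hy hxy
      have h3 : (1 : ℝ) - y ≤ 1 - x := by linarith
      exact mul_le_mul h3 h2 h1 (by linarith [hx.2])
  -- p x ≤ p x₀ on [0,1]
  have hple : ∀ x ∈ Set.Icc (0 : ℝ) 1, p x ≤ p x₀ := by
    intro x hx
    rcases le_total x x₀ with h | h
    · exact hpmono hx ⟨hx0, hx1⟩ h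
    · exact le_of_eq (hpconst x ⟨h, hx.2⟩)
  -- B ≤ p x₀
  have hBle : B ≤ p x₀ := by
    have := intervalIntegral.integral_mono_on zero_le_one hpint
      (_root_.intervalIntegrable_const (c := p x₀)) hple
    rw [hpB] at this
    simpa using this
  -- integrability of p on pieces
  have hsub1 : Set.uIcc (0 : ℝ) x₀ ⊆ Set.uIcc (0 : ℝ) 1 := by
    rw [Set.uIcc_of_le hx0, Set.uIcc_of_le zero_le_one]
    exact Set.Icc_subset_Icc_right hx1
  have hsub2 : Set.uIcc x₀ (1 : ℝ) ⊆ Set.uIcc (0 : ℝ) 1 := by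
    rw [Set.uIcc_of_le hx1, Set.uIcc_of_le zero_le_one]
    exact Set.Icc_subset_Icc_left hx0
  have hp0 : IntervalIntegrable p MeasureTheory.volume 0 x₀ := hpint.mono_set hsub1
  have hp1 : IntervalIntegrable p MeasureTheory.volume x₀ 1 := hpint.mono_set hsub2
  -- ∫₀^{x₀} (B - p) ≥ 0
  have hI1 : (∫ x in x₀..(1:ℝ), p x) = (1 - x₀) * p x₀ := by
    rw [intervalIntegral.integral_congr (g := fun _ => p x₀)
      (by intro x hx; exact hpconst x (by rwa [Set.uIcc_of_le hx1] at hx))]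
    simp [smul_eq_mul]
  have hIadd : (∫ x in (0:ℝ)..x₀, p x) + (∫ x in x₀..(1:ℝ), p x) = B := by
    rw [intervalIntegral.integral_add_adjacent_intervals hp0 hp1, hpB]
  have hIp0 : (∫ x in (0:ℝ)..x₀, p x) = B - (1 - x₀) * p x₀ := by
    rw [hI1] at hIadd; linarith
  have hIf0 : 0 ≤ ∫ x in (0:ℝ)..x₀, (B - p x) := by
    rw [intervalIntegral.integral_sub intervalIntegrable_const hp0, hIp0,
      intervalIntegral.integral_const]
    have : (0:ℝ) ≤ (1 - x₀) * (p x₀ - B) :=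
      mul_nonneg (by linarith) (by linarith)
    simp only [smul_eq_mul, sub_zero]
    nlinarith
  -- crossing point
  set S : Set ℝ := insert 0 {x ∈ Set.Icc (0:ℝ) x₀ | p x ≤ B} with hS
  have hSne : S.Nonempty := ⟨0, Set.mem_insert _ _⟩
  have hSbdd : BddAbove S := by
    refine ⟨x₀, ?_⟩
    rintro y (rfl | hy)
    · exact hx0
    · exact hy.1.2
  set c : ℝ := sSup S with hc
  have hle_c : ∀ y ∈ S, y ≤ x₀ := by
    rintro y (rfl | hy); exacts [hx0, hy.1.2]
  have hc0 : 0 ≤ c := le_csSup hSbdd (Set.mem_insert _ _)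
  have hcx₀ : c ≤ x₀ := csSup_le hSne hle_c
  have hcI : c ∈ Set.Icc (0:ℝ) 1 := ⟨hc0, hcx₀.trans hx1⟩
  -- before c : p ≤ B ; after c : B < p
  have hbefore : ∀ x ∈ Set.Icc (0:ℝ) x₀, x < c → p x ≤ B := by
    intro x hx hxc
    obtain ⟨y, hyS, hxy⟩ := exists_lt_of_lt_csSup hSne hxc
    rcases hyS with rfl | hy
    · linarith [hx.1]
    · exact le_trans (hpmono ⟨hx.1, hx.2.trans hx1⟩ ⟨hy.1.1, hy.1.2.trans hx1⟩ hxy.le) hy.2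
  have hafter : ∀ x ∈ Set.Icc (0:ℝ) x₀, c < x → B < p x := by
    intro x hx hcx
    by_contra h
    push_neg at h
    have : x ∈ S := Set.mem_insert_iff.2 (Or.inr ⟨hx, h⟩)
    exact absurd (le_csSup hSbdd this) (not_le.2 hcx)
  -- integrability pieces
  have hsubA : Set.uIcc (0:ℝ) c ⊆ Set.uIcc (0:ℝ) x₀ := by
    rw [Set.uIcc_of_le hc0, Set.uIcc_of_le hx0]
    exact Set.Icc_subset_Icc_right hcx₀
  have hsubB : Set.uIcc c x₀ ⊆ Set.uIcc (0:ℝ) x₀ := by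
    rw [Set.uIcc_of_le hcx₀, Set.uIcc_of_le hx0]
    exact Set.Icc_subset_Icc_left hc0
  have hintA : IntervalIntegrable (fun x => (B - p x) * g x) MeasureTheory.volume 0 c :=
    hint.mono_set hsubA
  have hintB : IntervalIntegrable (fun x => (B - p x) * g x) MeasureTheory.volume c x₀ :=
    hint.mono_set hsubB
  have hintcA : IntervalIntegrable (fun x => (B - p x) * g c) MeasureTheory.volume 0 c :=
    ((_root_.intervalIntegrable_const (c := B)).sub (hp0.mono_set hsubA)).mul_const (g c)
  have hintcB : IntervalIntegrable (fun x => (B - p x) * g c) MeasureTheory.volume c x₀ :=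
    ((_root_.intervalIntegrable_const (c := B)).sub (hp0.mono_set hsubB)).mul_const (g c)
  -- pointwise inequalities
  have hptA : ∀ x ∈ Set.Icc (0:ℝ) c, (B - p x) * g c ≤ (B - p x) * g x := by
    intro x hx
    rcases eq_or_lt_of_le hx.2 with rfl | hxc
    · exact le_rfl
    · have hxI : x ∈ Set.Icc (0:ℝ) 1 := ⟨hx.1, (hx.2.trans hcx₀).trans hx1⟩
      have hf : 0 ≤ B - p x := sub_nonneg.2 (hbefore x ⟨hx.1, hx.2.trans hcx₀⟩ hxc)
      exact mul_le_mul_of_nonneg_left (hgant hxI hcI hx.2) hf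
  have hptB : ∀ x ∈ Set.Icc c x₀, (B - p x) * g c ≤ (B - p x) * g x := by
    intro x hx
    rcases eq_or_lt_of_le hx.1 with rfl | hcx
    · exact le_rfl
    · have hxI : x ∈ Set.Icc (0:ℝ) 1 := ⟨hc0.trans hx.1, hx.2.trans hx1⟩
      have hf : B - p x ≤ 0 := sub_nonpos.2 (hafter x ⟨hc0.trans hx.1, hx.2⟩ hcx).le
      exact mul_le_mul_of_nonpos_left (hgant hcI hxI hx.1) hf
  -- piecewise integral inequalities
  have hA : (∫ x in (0:ℝ)..c, (B - p x) * g c) ≤ ∫ x in (0:ℝ)..c, (B - p x) * g x :=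
    intervalIntegral.integral_mono_on hc0 hintcA hintA hptA
  have hB2 : (∫ x in c..x₀, (B - p x) * g c) ≤ ∫ x in c..x₀, (B - p x) * g x :=
    intervalIntegral.integral_mono_on hcx₀ hintcB hintB hptB
  -- g c ≥ 0
  have hgc : 0 ≤ g c := by
    rcases eq_or_lt_of_le hcI.2 with h1 | h1
    · simp [hg, h1]
    · exact mul_nonneg (by linarith) (hd0 c ⟨hc0, h1⟩)
  -- conclude
  have hsplit : (∫ x in (0:ℝ)..c, (B - p x) * g x) + (∫ x in c..x₀, (B - p x) * g x)
      = ∫ x in (0:ℝ)..x₀, (B - p x) * g x :=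
    intervalIntegral.integral_add_adjacent_intervals hintA hintB
  have hsplitC : (∫ x in (0:ℝ)..c, (B - p x) * g c) + (∫ x in c..x₀, (B - p x) * g c)
      = ∫ x in (0:ℝ)..x₀, (B - p x) * g c :=
    intervalIntegral.integral_add_adjacent_intervals hintcA hintcB
  have hconst : (∫ x in (0:ℝ)..x₀, (B - p x) * g c)
      = (∫ x in (0:ℝ)..x₀, (B - p x)) * g c := by
    rw [intervalIntegral.integral_mul_const]
  have hfinal : 0 ≤ ∫ x in (0:ℝ)..x₀, (B - p x) * g c := by
    rw [hconst]; exact mul_nonneg hIf0 hgc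
  calc (0:ℝ) ≤ ∫ x in (0:ℝ)..x₀, (B - p x) * g c := hfinal
    _ = (∫ x in (0:ℝ)..c, (B - p x) * g c) + (∫ x in c..x₀, (B - p x) * g c) := hsplitC.symm
    _ ≤ (∫ x in (0:ℝ)..c, (B - p x) * g x) + (∫ x in c..x₀, (B - p x) * g x) :=
        add_le_add hA hB2
    _ = ∫ x in (0:ℝ)..x₀, (B - p x) * g x := hsplit
end
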